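/- Let k have characteristic 2, G = Sp(2n,k) acting on g* = sp(2n)* by (g·ξ)(x) = ξ(Ad(g)⁻¹x). Two elements ξ, ζ ∈ g* lie in the same G-orbit if and only if there exists g ∈ Sp(2n,k) such that α_ξ(g⁻¹v) = α_ζ(v) for all v ∈ V, where α_ξ(v) = β(v, X_ξ v) for any X_ξ representing ξ via the trace form. -/

import Mathlib

open Matrix

section helpers

variable {k : Type*} [Field k] [CharP k 2] {ι : Type*} [Fintype ι] [DecidableEq ι]

private lemma char2_eq_iff {a b : k} : a = b ↔ a + b = 0 := by
  rw [← sub_eq_zero, CharTwo.sub_eq_add]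

private lemma mat_add_self (M : Matrix ι ι k) : M + M = 0 := by
  ext i j; exact CharTwo.add_self_eq_zero _

/-- alternating decomposition -/
private lemma alt_decomp [LinearOrder ι] {N : Matrix ι ι k} (hsymm : Nᵀ = N)
    (hdiag : ∀ i, N i i = 0) : ∃ C : Matrix ι ι k, N = C + Cᵀ := by
  refine ⟨Matrix.of fun i j => if i < j then N i j else 0, ?_⟩
  ext i j
  have hji : N j i = N i j := by
    have := congrFun (congrFun hsymm i) j; simpa using this
  rcases lt_trichotomy i j with h | rfl | h
  · simp [Matrix.add_apply, h, not_lt.2 h.le]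
  · simp [hdiag i]
  · simp [Matrix.add_apply, h, not_lt.2 h.le, hji]

private lemma quad_zero_iff [LinearOrder ι] {N : Matrix ι ι k} :
    (∀ v : ι → k, v ⬝ᵥ N.mulVec v = 0) ↔ (Nᵀ = N ∧ ∀ i, N i i = 0) := by
  constructor
  · intro h
    have hdiag : ∀ i, N i i = 0 := by
      intro i
      have := h (Pi.single i 1)
      simpa [Matrix.mulVec_single, single_dotProduct] using this
    refine ⟨?_, hdiag⟩
    ext i j
    by_cases hij : i = j
    · subst hij; rfl
    · have := h (Pi.single i 1 + Pi.single j 1)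
      simp [Matrix.mulVec_add, Matrix.mulVec_single, dotProduct_add, add_dotProduct,
        single_dotProduct, hdiag] at this
      -- this : N i j + N j i = 0  (hopefully)
      have h2 : N j i = N i j := by
        rw [char2_eq_iff]; linear_combination this
      simpa [Matrix.transpose_apply] using h2
  · rintro ⟨hsymm, hdiag⟩ v
    obtain ⟨C, rfl⟩ := alt_decomp hsymm hdiag
    have h1 : v ⬝ᵥ Cᵀ.mulVec v = v ⬝ᵥ C.mulVec v := by
      rw [Matrix.dotProduct_mulVec, Matrix.vecMul_transpose, dotProduct_comm]
    rw [Matrix.add_mulVec, dotProduct_add, h1, CharTwo.add_self_eq_zero]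

private lemma trace_mul_stdBasis (P : Matrix ι ι k) (i j : ι) :
    (P * Matrix.single i j 1).trace = P j i := by
  simp [Matrix.trace, Matrix.diag, Matrix.mul_apply, Matrix.single, ite_and]

private lemma stdBasis_transpose (i j : ι) :
    (Matrix.single i j (1:k))ᵀ = Matrix.single j i 1 := by
  ext a b; simp [Matrix.single, and_comm]

private lemma trace_sym_zero_iff [LinearOrder ι] {P : Matrix ι ι k} :
    (∀ m : Matrix ι ι k, mᵀ = m → (P * m).trace = 0) ↔ (Pᵀ = P ∧ ∀ i, P i i = 0) := by
  constructor
  · intro h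
    have hdiag : ∀ i, P i i = 0 := by
      intro i
      have := h (Matrix.single i i 1) (stdBasis_transpose i i)
      rwa [trace_mul_stdBasis] at this
    refine ⟨?_, hdiag⟩
    ext i j
    by_cases hij : i = j
    · subst hij; rfl
    · have hm : (Matrix.single i j (1:k) + Matrix.single j i 1)ᵀ
          = Matrix.single i j 1 + Matrix.single j i 1 := by
        rw [Matrix.transpose_add, stdBasis_transpose, stdBasis_transpose, add_comm]
      have := h _ hm
      rw [Matrix.mul_add, Matrix.trace_add, trace_mul_stdBasis, trace_mul_stdBasis] at this
      have h2 : P j i = P i j := by rw [char2_eq_iff]; linear_combination this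
      simpa [Matrix.transpose_apply] using h2
  · rintro ⟨hsymm, hdiag⟩ m hm
    obtain ⟨C, rfl⟩ := alt_decomp hsymm hdiag
    have h1 : (Cᵀ * m).trace = (C * m).trace := by
      rw [← Matrix.trace_transpose, Matrix.transpose_mul, Matrix.transpose_transpose, hm,
        Matrix.trace_mul_comm]
    rw [Matrix.add_mul, Matrix.trace_add, h1, CharTwo.add_self_eq_zero]

private lemma sp_trace_iff {S A : Matrix ι ι k} (hSt : Sᵀ = S) (hSS : S * S = 1) :
    (∀ x : Matrix ι ι k, xᵀ * S + S * x = 0 → (A * x).trace = 0) ↔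
    (∀ m : Matrix ι ι k, mᵀ = m → (S * A * m).trace = 0) := by
  constructor
  · intro h m hm
    have hx : (m * S)ᵀ * S + S * (m * S) = 0 := by
      rw [Matrix.transpose_mul, hSt, hm, Matrix.mul_assoc, mat_add_self]
    have htr : (S * A * m).trace = (A * (m * S)).trace := by
      rw [Matrix.mul_assoc, Matrix.trace_mul_comm, Matrix.mul_assoc]
    rw [htr]; exact h _ hx
  · intro h x hx
    have hxS : xᵀ * S = S * x := by
      have h2 : xᵀ * S + (S * x + S * x) = S * x := by
        rw [← add_assoc, hx, zero_add]
      rwa [mat_add_self, add_zero] at h2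
    have hxt : xᵀ = S * (x * S) := by
      rw [← Matrix.mul_assoc, ← hxS, Matrix.mul_assoc, hSS, Matrix.mul_one]
    have hm : (x * S)ᵀ = x * S := by
      rw [Matrix.transpose_mul, hSt, hxt, ← Matrix.mul_assoc, hSS, Matrix.one_mul]
    have hxA : x * S * (S * A) = x * A := by
      rw [Matrix.mul_assoc, ← Matrix.mul_assoc S S, hSS, Matrix.one_mul]
    have htr : (A * x).trace = (S * A * (x * S)).trace := by
      rw [Matrix.trace_mul_comm (S * A), hxA, Matrix.trace_mul_comm]
    rw [htr]; exact h _ hm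

end helpers

/-- characteristic 2, `G = Sp(2n) = {g : gᵀSg = S}` acting on `sp(2n)*` by
`(g·ξ)(x) = ξ(g⁻¹xg)`.  Two functionals, represented by matrices `Xξ, Xζ` via the trace
pairing, lie in the same `G`-orbit iff there is `g ∈ Sp(2n)` with
`α_ξ(g⁻¹v) = α_ζ(v)` for all `v`, where `α_ξ(v) = β(v, Xξ v) = vᵀSXξv`. -/
theorem sp_dual_same_orbit_iff_quadratic_forms_match
    {k : Type*} [Field k] [CharP k 2] (n : ℕ)
    (S : Matrix (Fin n ⊕ Fin n) (Fin n ⊕ Fin n) k)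
    (hS : S = Matrix.fromBlocks 0 1 1 0)
    (Xξ Xζ : Matrix (Fin n ⊕ Fin n) (Fin n ⊕ Fin n) k) :
    (∃ g : Matrix (Fin n ⊕ Fin n) (Fin n ⊕ Fin n) k, gᵀ * S * g = S ∧
        ∀ x : Matrix (Fin n ⊕ Fin n) (Fin n ⊕ Fin n) k, xᵀ * S + S * x = 0 →
          (Xξ * (g⁻¹ * x * g)).trace = (Xζ * x).trace) ↔
    (∃ g : Matrix (Fin n ⊕ Fin n) (Fin n ⊕ Fin n) k, gᵀ * S * g = S ∧
        ∀ v : Fin n ⊕ Fin n → k,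
          (g⁻¹.mulVec v) ⬝ᵥ ((S * Xξ).mulVec (g⁻¹.mulVec v)) =
            v ⬝ᵥ ((S * Xζ).mulVec v)) := by
  letI : LinearOrder (Fin n ⊕ Fin n) :=
    LinearOrder.lift' finSumFinEquiv finSumFinEquiv.injective
  have hSt : Sᵀ = S := by
    rw [hS, Matrix.fromBlocks_transpose]
    simp
  have hSS : S * S = 1 := by
    rw [hS, Matrix.fromBlocks_multiply]
    simp [← Matrix.fromBlocks_one]
  have key : ∀ g : Matrix (Fin n ⊕ Fin n) (Fin n ⊕ Fin n) k, gᵀ * S * g = S →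
      ((∀ x : Matrix (Fin n ⊕ Fin n) (Fin n ⊕ Fin n) k, xᵀ * S + S * x = 0 →
          (Xξ * (g⁻¹ * x * g)).trace = (Xζ * x).trace) ↔
        (∀ v : Fin n ⊕ Fin n → k,
          (g⁻¹.mulVec v) ⬝ᵥ ((S * Xξ).mulVec (g⁻¹.mulVec v)) =
            v ⬝ᵥ ((S * Xζ).mulVec v))) := by
    intro g hg
    -- g is invertible
    have hdetS : IsUnit S.det := Matrix.isUnit_det_of_right_inverse hSS
    have hdetg : IsUnit g.det := by
      have h1 : g.det * g.det * S.det = S.det := by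
        have := congrArg Matrix.det hg
        rw [Matrix.det_mul, Matrix.det_mul, Matrix.det_transpose] at this
        linear_combination this
      have h2 : g.det * g.det = 1 :=
        mul_right_cancel₀ hdetS.ne_zero (by rw [h1, one_mul])
      exact IsUnit.of_mul_eq_one _ h2
    have hgr : g * g⁻¹ = 1 := Matrix.mul_nonsing_inv g hdetg
    -- key relation : S * g = g⁻¹ᵀ * S
    have h3 : gᵀ * S = S * g⁻¹ := by
      calc gᵀ * S = gᵀ * S * (g * g⁻¹) := by rw [hgr, Matrix.mul_one]
        _ = gᵀ * S * g * g⁻¹ := by rw [Matrix.mul_assoc (gᵀ * S)]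
        _ = S * g⁻¹ := by rw [hg]
    have hkey : S * g = g⁻¹ᵀ * S := by
      have := congrArg Matrix.transpose h3
      rw [Matrix.transpose_mul, Matrix.transpose_mul, hSt, Matrix.transpose_transpose] at this
      exact this
    set A : Matrix (Fin n ⊕ Fin n) (Fin n ⊕ Fin n) k := g * Xξ * g⁻¹ + Xζ with hA
    -- S * A computed
    have hSA : S * A = g⁻¹ᵀ * (S * Xξ) * g⁻¹ + S * Xζ := by
      rw [hA, Matrix.mul_add]
      congr 1
      calc S * (g * Xξ * g⁻¹) = S * g * Xξ * g⁻¹ := by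
            simp only [Matrix.mul_assoc]
        _ = g⁻¹ᵀ * S * Xξ * g⁻¹ := by rw [hkey]
        _ = g⁻¹ᵀ * (S * Xξ) * g⁻¹ := by rw [Matrix.mul_assoc g⁻¹ᵀ]
    -- step 1 : LHS ↔ trace vanishing for A
    have step1 : (∀ x : Matrix (Fin n ⊕ Fin n) (Fin n ⊕ Fin n) k, xᵀ * S + S * x = 0 →
        (Xξ * (g⁻¹ * x * g)).trace = (Xζ * x).trace) ↔
        (∀ x : Matrix (Fin n ⊕ Fin n) (Fin n ⊕ Fin n) k, xᵀ * S + S * x = 0 →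
          (A * x).trace = 0) := by
      apply forall_congr'; intro x
      apply imp_congr_right; intro _
      have htr : (Xξ * (g⁻¹ * x * g)).trace = (g * Xξ * g⁻¹ * x).trace := by
        rw [show Xξ * (g⁻¹ * x * g) = (Xξ * g⁻¹ * x) * g by
          simp only [Matrix.mul_assoc], Matrix.trace_mul_comm]
        simp only [Matrix.mul_assoc]
      rw [htr, char2_eq_iff, hA, Matrix.add_mul, Matrix.trace_add]
    -- step 2+3 : trace vanishing ↔ quadratic form of S*A vanishes
    have step2 : (∀ x : Matrix (Fin n ⊕ Fin n) (Fin n ⊕ Fin n) k, xᵀ * S + S * x = 0 →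
        (A * x).trace = 0) ↔ (∀ v : Fin n ⊕ Fin n → k, v ⬝ᵥ (S * A).mulVec v = 0) := by
      rw [sp_trace_iff hSt hSS, trace_sym_zero_iff, quad_zero_iff]
    -- step 4 : quadratic form vanishing ↔ RHS
    have step4 : (∀ v : Fin n ⊕ Fin n → k, v ⬝ᵥ (S * A).mulVec v = 0) ↔
        (∀ v : Fin n ⊕ Fin n → k,
          (g⁻¹.mulVec v) ⬝ᵥ ((S * Xξ).mulVec (g⁻¹.mulVec v)) =
            v ⬝ᵥ ((S * Xζ).mulVec v)) := by
      apply forall_congr'; intro v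
      have hq : (g⁻¹.mulVec v) ⬝ᵥ ((S * Xξ).mulVec (g⁻¹.mulVec v)) =
          v ⬝ᵥ ((g⁻¹ᵀ * (S * Xξ) * g⁻¹).mulVec v) := by
        rw [Matrix.mulVec_mulVec, Matrix.dotProduct_mulVec, Matrix.vecMul_mulVec,
          ← Matrix.dotProduct_mulVec]
        simp only [Matrix.mul_assoc]
      rw [hq, char2_eq_iff, hSA, Matrix.add_mulVec, dotProduct_add]
      rw [add_zero]
      exact char2_eq_iff.symm
    rw [step1, step2, step4]
  constructor
  · rintro ⟨g, hg, h⟩; exact ⟨g, hg, (key g hg).1 h⟩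
  · rintro ⟨g, hg, h⟩; exact ⟨g, hg, (key g hg).2 h⟩
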